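/- Let S be a finite set of points in the Euclidean plane ℝ², let w be a nonzero vector and c a constant, and suppose a, b ∈ S are distinct points with {x ∈ S : ⟪w, x⟫ = c} = {a, b}. Let T = {x ∈ S : ⟪w, x⟫ < c}. Then each of the four sets T, T ∪ {a}, T ∪ {b}, and T ∪ {a, b} is strictly linearly separable from its complement in S, i.e., for each such set U there exist a nonzero vector w' and a constant c' with ⟪w', x⟫ < c' for all x ∈ U and ⟪w', x⟫ > c' for all x ∈ S \ U. -/
import Mathlib

open RealInnerProductSpace

lemma sep_lemma (S : Finset (EuclideanSpace ℝ (Fin 2)))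
    (U : Set (EuclideanSpace ℝ (Fin 2))) (w' : EuclideanSpace ℝ (Fin 2))
    (h : ∀ x ∈ S, x ∈ U → ∀ y ∈ S, y ∉ U → ⟪w', x⟫ < ⟪w', y⟫) :
    ∃ c' : ℝ, (∀ x ∈ S, x ∈ U → ⟪w', x⟫ < c') ∧ (∀ y ∈ S, y ∉ U → ⟪w', y⟫ > c') := by
  classical
  set A := (S.filter (· ∈ U)).image (fun x => ⟪w', x⟫) with hA
  set B := (S.filter (· ∉ U)).image (fun x => ⟪w', x⟫) with hB
  have memA : ∀ x ∈ S, x ∈ U → ⟪w', x⟫ ∈ A := by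
    intro x hx hxU
    exact Finset.mem_image_of_mem _ (Finset.mem_filter.2 ⟨hx, hxU⟩)
  have memB : ∀ y ∈ S, y ∉ U → ⟪w', y⟫ ∈ B := by
    intro y hy hyU
    exact Finset.mem_image_of_mem _ (Finset.mem_filter.2 ⟨hy, hyU⟩)
  rcases A.eq_empty_or_nonempty with hAe | hAn
  · rcases B.eq_empty_or_nonempty with hBe | hBn
    · refine ⟨0, ?_, ?_⟩
      · intro x hx hxU; exact absurd (memA x hx hxU) (by simp [hAe])
      · intro y hy hyU; exact absurd (memB y hy hyU) (by simp [hBe])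
    · refine ⟨B.min' hBn - 1, ?_, ?_⟩
      · intro x hx hxU; exact absurd (memA x hx hxU) (by simp [hAe])
      · intro y hy hyU
        have := B.min'_le _ (memB y hy hyU)
        linarith
  · rcases B.eq_empty_or_nonempty with hBe | hBn
    · refine ⟨A.max' hAn + 1, ?_, ?_⟩
      · intro x hx hxU
        have := A.le_max' _ (memA x hx hxU)
        linarith
      · intro y hy hyU; exact absurd (memB y hy hyU) (by simp [hBe])
    · have hlt : A.max' hAn < B.min' hBn := by
        obtain ⟨x, hxm⟩ := Finset.mem_image.1 (A.max'_mem hAn)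
        obtain ⟨y, hym⟩ := Finset.mem_image.1 (B.min'_mem hBn)
        obtain ⟨hx, hxU⟩ := Finset.mem_filter.1 hxm.1
        obtain ⟨hy, hyU⟩ := Finset.mem_filter.1 hym.1
        rw [← hxm.2, ← hym.2]
        exact h x hx hxU y hy hyU
      refine ⟨(A.max' hAn + B.min' hBn) / 2, ?_, ?_⟩
      · intro x hx hxU
        have := A.le_max' _ (memA x hx hxU)
        linarith
      · intro y hy hyU
        have := B.min'_le _ (memB y hy hyU)
        linarith

lemma eps_lemma (S : Finset (EuclideanSpace ℝ (Fin 2)))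
    (g h : EuclideanSpace ℝ (Fin 2) → ℝ) :
    ∃ ε : ℝ, 0 < ε ∧ ∀ x ∈ S, ∀ y ∈ S, g x < g y → g x + ε * h x < g y + ε * h y := by
  classical
  set P : Finset ℝ := insert 1 ((S ×ˢ S).image
    (fun p => if g p.1 < g p.2 then (g p.2 - g p.1) / (|h p.1 - h p.2| + 1) else 1)) with hP
  have hPn : P.Nonempty := ⟨1, Finset.mem_insert_self _ _⟩
  set ε := P.min' hPn with hε
  have hpos : 0 < ε := by
    have hm := P.min'_mem hPn
    rcases Finset.mem_insert.1 hm with h1 | hm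
    · rw [hε, h1]; norm_num
    · obtain ⟨p, _, hp⟩ := Finset.mem_image.1 hm
      rw [hε, ← hp]
      split
      · apply div_pos (by linarith) (by positivity)
      · norm_num
  refine ⟨ε, hpos, ?_⟩
  intro x hx y hy hxy
  have hle : ε ≤ (g y - g x) / (|h x - h y| + 1) := by
    apply P.min'_le
    rw [hP]
    apply Finset.mem_insert_of_mem
    apply Finset.mem_image.2
    exact ⟨(x, y), Finset.mem_product.2 ⟨hx, hy⟩, by simp [hxy]⟩
  have hD : h x - h y ≤ |h x - h y| := le_abs_self _
  have hD0 : (0:ℝ) ≤ |h x - h y| := abs_nonneg _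
  have key : ε * (|h x - h y| + 1) ≤ g y - g x := (le_div_iff₀ (by positivity)).1 hle
  nlinarith

lemma onept_lemma (S : Finset (EuclideanSpace ℝ (Fin 2)))
    (w : EuclideanSpace ℝ (Fin 2)) (c : ℝ)
    (a b : EuclideanSpace ℝ (Fin 2)) (hab : a ≠ b)
    (hl : ∀ y ∈ S, ⟪w, y⟫ = c → y = a ∨ y = b)
    (fa : ⟪w, a⟫ = c) (fb : ⟪w, b⟫ = c)
    (T : Set (EuclideanSpace ℝ (Fin 2)))
    (hT : T = {x : EuclideanSpace ℝ (Fin 2) | x ∈ S ∧ ⟪w, x⟫ < c}) :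
    ∃ w' : EuclideanSpace ℝ (Fin 2), w' ≠ 0 ∧ ∃ c' : ℝ,
      (∀ x ∈ S, x ∈ T ∪ {a} → ⟪w', x⟫ < c') ∧
      (∀ x ∈ S, x ∉ T ∪ {a} → ⟪w', x⟫ > c') := by
  obtain ⟨ε, hε, heps⟩ := eps_lemma S (fun x => ⟪w, x⟫) (fun x => ⟪b - a, x⟫)
  set w' := w + ε • (b - a) with hw'
  have hinner : ∀ x : EuclideanSpace ℝ (Fin 2), ⟪w', x⟫ = ⟪w, x⟫ + ε * ⟪b - a, x⟫ := by
    intro x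
    rw [hw', inner_add_left, real_inner_smul_left]
  have hpos : (0:ℝ) < ⟪b - a, b - a⟫ := by
    rw [real_inner_self_eq_norm_mul_norm]
    have hne : b - a ≠ 0 := sub_ne_zero.2 hab.symm
    have := norm_pos_iff.2 hne
    positivity
  have hsub : ⟪b - a, b⟫ - ⟪b - a, a⟫ = ⟪b - a, b - a⟫ := by rw [inner_sub_right]
  have hprog : ⟪w', a⟫ < ⟪w', b⟫ := by
    rw [hinner, hinner, fa, fb]
    nlinarith
  have key : ∀ x ∈ S, x ∈ T ∪ {a} → ∀ y ∈ S, y ∉ T ∪ {a} → ⟪w', x⟫ < ⟪w', y⟫ := by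
    intro x hx hxU y hy hyU
    have hyT : y ∉ T := fun h => hyU (Or.inl h)
    have hya : y ≠ a := fun h => hyU (Or.inr h)
    have hyge : c ≤ ⟪w, y⟫ := by
      by_contra hlt
      push_neg at hlt
      exact hyT (hT ▸ ⟨hy, hlt⟩)
    rcases hxU with hxT | hxa
    · rw [hT] at hxT
      have hxlt : ⟪w, x⟫ < c := hxT.2
      rw [hinner, hinner]
      exact heps x hx y hy (lt_of_lt_of_le hxlt hyge)
    · have hxa' : x = a := hxa
      subst hxa'
      rcases lt_or_eq_of_le hyge with hgt | heq
      · rw [hinner, hinner]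
        exact heps x hx y hy (by rw [fa]; exact hgt)
      · rcases hl y hy heq.symm with h1 | h2
        · exact absurd h1 hya
        · rw [h2]; exact hprog
  have hw0 : w' ≠ 0 := by
    intro h0
    rw [h0, inner_zero_left, inner_zero_left] at hprog
    exact lt_irrefl _ hprog
  obtain ⟨c', hc1, hc2⟩ := sep_lemma S (T ∪ {a}) w' key
  exact ⟨w', hw0, c', hc1, hc2⟩

/-- Given a finite set `S` of points in the plane and a line `{x : ⟪w, x⟫ = c}` that
passes through exactly two points `a, b` of `S`, let `T` be the set of points of `S`
strictly on the negative side of the line. Then each of the four sets `T`, `T ∪ {a}`,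
`T ∪ {b}`, `T ∪ {a, b}` is strictly linearly separable from its complement in `S`. -/
theorem line_through_two_points_gives_separable_coalitions
    (S : Finset (EuclideanSpace ℝ (Fin 2)))
    (w : EuclideanSpace ℝ (Fin 2)) (hw : w ≠ 0) (c : ℝ)
    (a b : EuclideanSpace ℝ (Fin 2)) (ha : a ∈ S) (hb : b ∈ S) (hab : a ≠ b)
    (hline : {x : EuclideanSpace ℝ (Fin 2) | x ∈ S ∧ ⟪w, x⟫ = c} = {a, b})
    (T : Set (EuclideanSpace ℝ (Fin 2)))
    (hT : T = {x : EuclideanSpace ℝ (Fin 2) | x ∈ S ∧ ⟪w, x⟫ < c}) :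
    ∀ U ∈ ({T, T ∪ {a}, T ∪ {b}, T ∪ {a, b}} :
        Set (Set (EuclideanSpace ℝ (Fin 2)))),
      ∃ w' : EuclideanSpace ℝ (Fin 2), w' ≠ 0 ∧ ∃ c' : ℝ,
        (∀ x ∈ S, x ∈ U → ⟪w', x⟫ < c') ∧
        (∀ x ∈ S, x ∉ U → ⟪w', x⟫ > c') := by
  have hl' := Set.ext_iff.1 hline
  have fa : ⟪w, a⟫ = c := ((hl' a).2 (by simp)).2
  have fb : ⟪w, b⟫ = c := ((hl' b).2 (by simp)).2
  have hl : ∀ y ∈ S, ⟪w, y⟫ = c → y = a ∨ y = b := by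
    intro y hy hyc
    have := (hl' y).1 ⟨hy, hyc⟩
    simpa using this
  intro U hU
  simp only [Set.mem_insert_iff, Set.mem_singleton_iff] at hU
  rcases hU with rfl | rfl | rfl | rfl
  · -- U = T
    refine ⟨w, hw, ?_⟩
    apply sep_lemma
    intro x hx hxT y hy hyT
    rw [hT] at hxT
    have hyge : c ≤ ⟪w, y⟫ := by
      by_contra hlt
      push_neg at hlt
      exact hyT (hT ▸ ⟨hy, hlt⟩)
    exact lt_of_lt_of_le hxT.2 hyge
  · -- U = T ∪ {a}
    exact onept_lemma S w c a b hab hl fa fb T hT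
  · -- U = T ∪ {b}
    exact onept_lemma S w c b a hab.symm
      (fun y hy hyc => (hl y hy hyc).symm) fb fa T hT
  · -- U = T ∪ {a, b}
    refine ⟨w, hw, ?_⟩
    apply sep_lemma
    intro x hx hxU y hy hyU
    have hyT : y ∉ T := fun h => hyU (Or.inl h)
    have hya : y ≠ a := fun h => hyU (Or.inr (Or.inl h))
    have hyb : y ≠ b := fun h => hyU (Or.inr (Or.inr h))
    have hyge : c ≤ ⟪w, y⟫ := by
      by_contra hlt
      push_neg at hlt
      exact hyT (hT ▸ ⟨hy, hlt⟩)
    have hygt : c < ⟪w, y⟫ := by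
      rcases lt_or_eq_of_le hyge with h1 | h2
      · exact h1
      · rcases hl y hy h2.symm with h3 | h3
        · exact absurd h3 hya
        · exact absurd h3 hyb
    have hxle : ⟪w, x⟫ ≤ c := by
      rcases hxU with hxT | hxab
      · exact le_of_lt (hT ▸ hxT).2
      · rcases hxab with h1 | h2
        · rw [h1]; exact le_of_eq fa
        · rw [h2]; exact le_of_eq fb
    exact lt_of_le_of_lt hxle hygt
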